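/- Let n ≥ 1 and define h_n : [0,1]^n → [0,1) by h_n(x) = min(1 − 2^{−(n+1)}, (2^{n+1}−1)·min_{1≤i≤n} x_i). Let k_1, …, k_n ≥ 0 be integers and let a_j = m_j·2^{−k_j} for integers 0 ≤ m_j < 2^{k_j} (1 ≤ j ≤ n). Then h_n crosses the box S = (∏_{j=1}^{n} [a_j, a_j + 2^{−k_j})) × [0,1). -/

import Mathlib

open MeasureTheory

/-- `f` crosses `S ⊆ ℝ^{n+1}` if both the part of `S` strictly below the graph of `f`
and the part strictly above it have positive Lebesgue measure. -/
def Crosses (n : ℕ) (f : (Fin n → ℝ) → ℝ) (S : Set (Fin (n + 1) → ℝ)) : Prop :=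
  0 < volume (S ∩ {p | f (fun j => p j.castSucc) < p (Fin.last n)}) ∧
  0 < volume (S ∩ {p | p (Fin.last n) < f (fun j => p j.castSucc)})

/-- The function `h_n(x) = min(1 - 2^{-(n+1)}, (2^{n+1} - 1) · min_i x_i)`. -/
noncomputable def hfun (n : ℕ) (x : Fin n → ℝ) : ℝ :=
  min (1 - ((2 : ℝ) ^ (n + 1))⁻¹) (((2 : ℝ) ^ (n + 1) - 1) * ⨅ i, x i)

lemma pos_vol (N : ℕ) (l u : Fin N → ℝ) (h : ∀ i, l i < u i) :
    0 < volume (Set.pi Set.univ fun i => Set.Ioo (l i) (u i)) := by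
  rw [volume_pi_pi]
  refine CanonicallyOrderedAdd.prod_pos.mpr fun i _ => ?_
  rw [Real.volume_Ioo]
  exact ENNReal.ofReal_pos.mpr (by linarith [h i])

theorem stmt_12 (n : ℕ) (hn : 1 ≤ n) (k m : Fin n → ℕ) (hm : ∀ j, m j < 2 ^ k j) :
    Crosses n (hfun n)
      {p : Fin (n + 1) → ℝ |
        (∀ i : Fin n, p i.castSucc ∈
          Set.Ico ((m i : ℝ) / 2 ^ k i) ((m i : ℝ) / 2 ^ k i + ((2 : ℝ) ^ k i)⁻¹)) ∧
        p (Fin.last n) ∈ Set.Ico (0 : ℝ) 1} := by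
  classical
  haveI : Nonempty (Fin n) := ⟨⟨0, hn⟩⟩
  set a : Fin n → ℝ := fun j => (m j : ℝ) / 2 ^ k j with ha
  set ε : Fin n → ℝ := fun j => ((2 : ℝ) ^ k j)⁻¹ with hε'
  have hε : ∀ j, 0 < ε j := fun j => by positivity
  have ha0 : ∀ j, 0 ≤ a j := fun j => by positivity
  set K := Finset.univ.sup k with hK
  set δ : ℝ := ((2 : ℝ) ^ (K + 1))⁻¹ with hδ'
  have hδ : 0 < δ := by positivity
  have hδle : ∀ j, δ ≤ ε j / 2 := by
    intro j
    have h1 : ε j / 2 = ((2 : ℝ) ^ (k j + 1))⁻¹ := by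
      rw [hε', pow_succ]; field_simp
    rw [h1, hδ']
    apply inv_anti₀ (by positivity)
    exact pow_le_pow_right₀ (by norm_num) (Nat.succ_le_succ (Finset.le_sup (Finset.mem_univ j)))
  have h2pow : (1 : ℝ) < 2 ^ (n + 1) := one_lt_pow₀ (by norm_num) (by omega)
  set A : ℝ := 1 - ((2 : ℝ) ^ (n + 1))⁻¹ with hA'
  have hA0 : 0 < A := by
    have : ((2 : ℝ) ^ (n + 1))⁻¹ < 1 := inv_lt_one_of_one_lt₀ h2pow
    simp only [hA']; linarith
  have hA1 : A < 1 := by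
    have : 0 < ((2 : ℝ) ^ (n + 1))⁻¹ := by positivity
    simp only [hA']; linarith
  set c : ℝ := min A (((2 : ℝ) ^ (n + 1) - 1) * δ) with hc'
  have hc0 : 0 < c := lt_min hA0 (mul_pos (by linarith) hδ)
  have hcA : c ≤ A := min_le_left _ _
  constructor
  · -- part with f < t : take t close to 1
    refine lt_of_lt_of_le
      (pos_vol (n + 1) (Fin.snoc a A) (Fin.snoc (fun j => a j + ε j) 1)
        (fun i => ?_)) (measure_mono ?_)
    · induction i using Fin.lastCases with
      | last => simpa using hA1
      | cast j => simpa using (hε j)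
    · intro p hp
      have hx : ∀ j : Fin n, p j.castSucc ∈ Set.Ioo (a j) (a j + ε j) := by
        intro j
        have := hp j.castSucc (Set.mem_univ _)
        simpa using this
      have ht : p (Fin.last n) ∈ Set.Ioo A 1 := by
        have := hp (Fin.last n) (Set.mem_univ _)
        simpa using this
      refine ⟨⟨fun (j : Fin n) => ⟨(hx j).1.le, (hx j).2⟩, ⟨by linarith [ht.1], ht.2⟩⟩, ?_⟩
      have : hfun n (fun j => p j.castSucc) ≤ A := min_le_left _ _
      exact lt_of_le_of_lt this ht.1
  · -- part with t < f : take x bounded away from a, t small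
    refine lt_of_lt_of_le
      (pos_vol (n + 1) (Fin.snoc (fun j => a j + ε j / 2) 0)
        (Fin.snoc (fun j => a j + ε j) c) (fun i => ?_)) (measure_mono ?_)
    · induction i using Fin.lastCases with
      | last => simpa using hc0
      | cast j => simp; linarith [hε j]
    · intro p hp
      have hx : ∀ j : Fin n, p j.castSucc ∈ Set.Ioo (a j + ε j / 2) (a j + ε j) := by
        intro j
        have := hp j.castSucc (Set.mem_univ _)
        simpa using this
      have ht : p (Fin.last n) ∈ Set.Ioo (0 : ℝ) c := by
        have := hp (Fin.last n) (Set.mem_univ _)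
        simpa using this
      have hδx : ∀ j : Fin n, δ ≤ p j.castSucc := by
        intro j
        have := (hx j).1
        have := hδle j
        have := ha0 j
        linarith
      have hinf : δ ≤ ⨅ j : Fin n, p j.castSucc := le_ciInf hδx
      have hcf : c ≤ hfun n (fun j => p j.castSucc) := by
        refine le_min hcA ?_
        refine le_trans (min_le_right A _) ?_
        exact mul_le_mul_of_nonneg_left hinf (by linarith)
      refine ⟨⟨fun (j : Fin n) => ⟨by linarith [(hx j).1, hε j], (hx j).2⟩,
        ⟨ht.1.le, lt_of_lt_of_le ht.2 (by linarith)⟩⟩, lt_of_lt_of_le ht.2 hcf⟩
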